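/- Let k be a field, n ≥ 1, 0 ≤ r ≤ n, A = k[X₁,...,X_n], and B = k[X₁,...,X_{n−r}] the subring generated by the first n−r variables. Let M be a nonzero finitely generated A-module such that A/ann(M) is a finitely generated B-module and the Krull dimension of A/ann(M) equals n − r. Then M is r-pure, i.e. for every nonzero m ∈ M the Krull dimension of A/ann(A•m) equals n − r, if and only if the localization map M → S⁻¹M with S = B \ {0} is injective, i.e. no nonzero element of M is annihilated by a nonzero polynomial in the first n−r variables. -/

import Mathlib

/-
Auxiliary development: enough Krull-dimension theory (incomparability, lying over /
going up, and a transcendence-counting bound for polynomial rings) to prove the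
purity criterion.
-/

open Order

namespace PurityAux

/-! ### Order-theoretic utilities -/

variable {α : Type*} [Preorder α]

lemma exists_ltSeries_of_coe_le_krullDim {n : ℕ} (h : (n : WithBot ℕ∞) ≤ krullDim α) :
    ∃ p : LTSeries α, p.length = n := by
  have hne : Nonempty α := by
    by_contra hc
    rw [not_nonempty_iff] at hc
    rw [krullDim_eq_bot] at h
    exact absurd h (by simp)
  obtain ⟨p, hp⟩ : ∃ p : LTSeries α, n ≤ p.length := by
    by_contra hc
    push_neg at hc
    cases n with
    | zero => exact absurd (hc (RelSeries.singleton _ (Classical.arbitrary α))) (by simp)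
    | succ n =>
      have hb : krullDim α ≤ ((n : ℕ) : WithBot ℕ∞) := by
        rw [krullDim_eq_iSup_length]
        have : ∀ p : LTSeries α, (p.length : ℕ∞) ≤ (n : ℕ∞) :=
          fun p => Nat.cast_le.mpr (by have := hc p; omega)
        exact_mod_cast WithBot.coe_le_coe.mpr (iSup_le this)
      have := h.trans hb
      have : (n + 1 : ℕ) ≤ n := by exact_mod_cast this
      omega
  refine ⟨⟨n, fun i => p.toFun ⟨i.1, by omega⟩, fun i => p.strictMono ?_⟩, rfl⟩
  simp only [Fin.lt_def, Fin.coe_castSucc, Fin.val_succ]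
  omega

/-! ### Krull dimension and integral ring maps -/

variable {R S : Type*} [CommRing R] [CommRing S]

lemma strictMono_comap_of_isIntegral (f : R →+* S) (hf : f.IsIntegral) :
    StrictMono (fun P : PrimeSpectrum S => PrimeSpectrum.comap f P) := by
  intro P Q hPQ
  letI := f.toAlgebra
  have halg : algebraMap R S = f := rfl
  have hlt : P.asIdeal < Q.asIdeal := hPQ
  obtain ⟨x, hxQ, hxP⟩ := SetLike.exists_of_lt hlt
  have : P.asIdeal.comap (algebraMap R S) < Q.asIdeal.comap (algebraMap R S) :=
    Ideal.comap_lt_comap_of_integral_mem_sdiff (I := P.asIdeal) hlt.le ⟨hxQ, hxP⟩ (hf x)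
  rw [halg] at this
  exact this

lemma ringKrullDim_le_of_isIntegral (f : R →+* S) (hf : f.IsIntegral) :
    ringKrullDim S ≤ ringKrullDim R :=
  krullDim_le_of_strictMono _ (strictMono_comap_of_isIntegral f hf)

lemma le_ringKrullDim_of_isIntegral_of_injective (f : R →+* S) (hf : f.IsIntegral)
    (hinj : Function.Injective f) :
    ringKrullDim R ≤ ringKrullDim S := by
  letI := f.toAlgebra
  have halg : algebraMap R S = f := rfl
  haveI : Algebra.IsIntegral R S := ⟨fun x => hf x⟩
  have key : ∀ (n : ℕ) (p : LTSeries (PrimeSpectrum R)), p.length = n →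
      ∃ q : LTSeries (PrimeSpectrum S),
      q.length = p.length ∧ PrimeSpectrum.comap f q.last = p.last := by
    intro n
    induction n with
    | zero =>
      intro p hp
      haveI := p.last.isPrime
      obtain ⟨Q, hQge, hQprime, hQcomap⟩ :=
        Ideal.exists_ideal_over_prime_of_isIntegral (S := S) p.last.asIdeal ⊥
          (by rw [halg, ← RingHom.ker_eq_comap_bot, (RingHom.injective_iff_ker_eq_bot f).mp hinj]
              exact bot_le)
      exact ⟨RelSeries.singleton _ ⟨Q, hQprime⟩, by simp [hp],
        PrimeSpectrum.ext (by simpa [halg] using hQcomap)⟩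
    | succ n ih =>
      intro p hp
      obtain ⟨q, hqlen, hqlast⟩ := ih p.eraseLast (by simp [hp])
      haveI := p.last.isPrime
      haveI := q.last.isPrime
      have hstep : p.eraseLast.last < p.last :=
        p.eraseLast_last_rel_last (by omega)
      obtain ⟨Q, hQge, hQprime, hQcomap⟩ :=
        Ideal.exists_ideal_over_prime_of_isIntegral (S := S) p.last.asIdeal q.last.asIdeal
          (by rw [halg]
              show (PrimeSpectrum.comap f q.last).asIdeal ≤ p.last.asIdeal
              rw [hqlast]; exact le_of_lt hstep)
      have hlt : q.last < ⟨Q, hQprime⟩ := by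
        refine lt_of_le_of_ne hQge ?_
        intro hcontra
        apply hstep.ne
        rw [← hqlast, hcontra]
        exact PrimeSpectrum.ext (by simpa [halg] using hQcomap)
      refine ⟨q.snoc ⟨Q, hQprime⟩ hlt, by simp [hqlen]; omega, ?_⟩
      rw [RelSeries.last_snoc]
      exact PrimeSpectrum.ext (by simpa [halg] using hQcomap)
  rcases isEmpty_or_nonempty (PrimeSpectrum R) with hemp | hne
  · rw [ringKrullDim, krullDim_eq_bot]; exact bot_le
  · rw [ringKrullDim, ringKrullDim, krullDim]
    refine iSup_le fun p => ?_
    obtain ⟨q, hqlen, -⟩ := key p.length p rfl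
    rw [← hqlen]
    exact Order.LTSeries.length_le_krullDim q

/-! ### Extending algebraically independent families -/

variable {k A : Type*} [Field k] [CommRing A] [IsDomain A] [Algebra k A]

lemma algebraicIndependent_option {ι : Type*} (I : Ideal A) {a : A} (haI : a ∈ I) (ha0 : a ≠ 0)
    {y : ι → A} (hy : AlgebraicIndependent k fun i => Ideal.Quotient.mk I (y i)) :
    AlgebraicIndependent k (fun o : Option ι => o.elim a y) := by
  classical
  have hmk : ∀ q : MvPolynomial ι k,
      Ideal.Quotient.mk I (MvPolynomial.aeval y q) =
        MvPolynomial.aeval (fun i => Ideal.Quotient.mk I (y i)) q := by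
    intro q
    have h := MvPolynomial.comp_aeval (R := k) y (Ideal.Quotient.mkₐ k I)
    have := AlgHom.congr_fun h q
    simpa using this
  rw [AlgebraicIndependent, injective_iff_map_eq_zero]
  intro F hF
  set e := MvPolynomial.optionEquivLeft k ι with he
  have key : (Polynomial.eval₂RingHom
        ((MvPolynomial.aeval y : MvPolynomial ι k →ₐ[k] A) : MvPolynomial ι k →+* A) a).comp
        (e : MvPolynomial (Option ι) k →+* Polynomial (MvPolynomial ι k)) =
      ((MvPolynomial.aeval (fun o : Option ι => o.elim a y) :
          MvPolynomial (Option ι) k →ₐ[k] A) : MvPolynomial (Option ι) k →+* A) := by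
    apply MvPolynomial.ringHom_ext
    · intro c
      simp [he, MvPolynomial.optionEquivLeft_C]
    · intro o
      cases o with
      | none => simp [he, MvPolynomial.optionEquivLeft_X_none]
      | some i => simp [he, MvPolynomial.optionEquivLeft_X_some]
  by_contra hF0
  have hp0 : e F ≠ 0 := fun h => hF0 (by
    have := congrArg e.symm h
    simpa using this)
  have heval : Polynomial.eval₂
      ((MvPolynomial.aeval y : MvPolynomial ι k →ₐ[k] A) : MvPolynomial ι k →+* A) a (e F) = 0 := by
    have := RingHom.congr_fun key F
    simpa using this.trans hF
  obtain ⟨i, hc0, hcI⟩ :=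
    Ideal.exists_coeff_ne_zero_mem_comap_of_root_mem (I := I) ha0 haI hp0 heval
  apply hc0
  have hz : MvPolynomial.aeval (fun i => Ideal.Quotient.mk I (y i)) ((e F).coeff i) = 0 := by
    rw [← hmk, Ideal.Quotient.eq_zero_iff_mem]
    exact hcI
  exact (injective_iff_map_eq_zero _).mp hy _ hz

universe u v

lemma exists_algebraicIndependent_of_ltSeries (k : Type u) [Field k] :
    ∀ (n : ℕ) {A : Type v} [CommRing A] [IsDomain A] [Algebra k A]
      (l : LTSeries (PrimeSpectrum A)), l.length = n →
      ∃ y : Fin n → A, AlgebraicIndependent k y := by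
  intro n
  induction n with
  | zero =>
    intro A _ _ _ l hl
    exact ⟨fun i => 0, algebraicIndependent_empty_type⟩
  | succ n ih =>
    intro A _ _ _ l hl
    set p₁ : PrimeSpectrum A := l.toFun ⟨1, by omega⟩ with hp₁def
    have hheadlt : l.toFun ⟨0, by omega⟩ < p₁ := l.strictMono (by simp [Fin.lt_def])
    have hp₁bot : p₁.asIdeal ≠ ⊥ := by
      intro hc
      have : (l.toFun ⟨0, by omega⟩).asIdeal < p₁.asIdeal := hheadlt
      rw [hc] at this
      exact (not_lt_bot this)
    haveI hp₁prime := p₁.isPrime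
    have hle : ∀ i : Fin (n + 1), p₁.asIdeal ≤ (l.toFun ⟨i.1 + 1, by omega⟩).asIdeal := by
      intro i
      have : p₁ ≤ l.toFun ⟨i.1 + 1, by omega⟩ :=
        l.strictMono.monotone (by simp [Fin.le_def])
      exact this
    have hmaplt : ∀ (P Q : Ideal A), p₁.asIdeal ≤ P → P < Q →
        P.map (Ideal.Quotient.mk p₁.asIdeal) < Q.map (Ideal.Quotient.mk p₁.asIdeal) := by
      intro P Q hP hPQ
      refine lt_of_le_of_ne (Ideal.map_mono hPQ.le) ?_
      intro hc
      have hcP := Ideal.comap_map_of_surjective (Ideal.Quotient.mk p₁.asIdeal)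
        Ideal.Quotient.mk_surjective P
      have hcQ := Ideal.comap_map_of_surjective (Ideal.Quotient.mk p₁.asIdeal)
        Ideal.Quotient.mk_surjective Q
      rw [hc] at hcP
      rw [hcQ] at hcP
      rw [← RingHom.ker_eq_comap_bot, Ideal.mk_ker] at hcP
      have hPeq : Q ⊔ p₁.asIdeal = Q := sup_eq_left.mpr (hP.trans hPQ.le)
      have hQeq : P ⊔ p₁.asIdeal = P := sup_eq_left.mpr hP
      rw [hPeq, hQeq] at hcP
      exact hPQ.ne hcP.symm
    have hprime : ∀ i : Fin (n + 1),
        ((l.toFun ⟨i.1 + 1, by omega⟩).asIdeal.map (Ideal.Quotient.mk p₁.asIdeal)).IsPrime := by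
      intro i
      refine Ideal.map_isPrime_of_surjective Ideal.Quotient.mk_surjective ?_
      rw [Ideal.mk_ker]
      exact hle i
    let l' : LTSeries (PrimeSpectrum (A ⧸ p₁.asIdeal)) :=
      ⟨n, fun i => ⟨(l.toFun ⟨i.1 + 1, by omega⟩).asIdeal.map (Ideal.Quotient.mk p₁.asIdeal),
          hprime i⟩,
        fun i => by
          refine hmaplt _ _ (hle i.castSucc) ?_
          exact l.strictMono (by simp [Fin.lt_def])⟩
    obtain ⟨y', hy'⟩ := ih l' rfl
    choose y hy using fun i => Ideal.Quotient.mk_surjective (I := p₁.asIdeal) (y' i)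
    obtain ⟨a, haI, ha0⟩ := Submodule.exists_mem_ne_zero_of_ne_bot hp₁bot
    have hmky : AlgebraicIndependent k fun i => Ideal.Quotient.mk p₁.asIdeal (y i) := by
      have : (fun i => Ideal.Quotient.mk p₁.asIdeal (y i)) = y' := funext fun i => hy i
      rw [this]; exact hy'
    have hopt := algebraicIndependent_option (k := k) p₁.asIdeal haI ha0 hmky
    exact ⟨_, hopt.comp (finSuccEquiv n) (finSuccEquiv n).injective⟩

/-! ### No `d + 1` algebraically independent elements in `d` variables -/

open MvPolynomial in
lemma not_algebraicIndependent_succ {k : Type u} [Field k] (d : ℕ)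
    (x : Fin (d + 1) → MvPolynomial (Fin d) k) : ¬ AlgebraicIndependent k x := by
  classical
  intro h
  set D : ℕ := (Finset.univ.sup fun i => (x i).totalDegree) + 1 with hD
  have hDpos : 1 ≤ D := by omega
  have hxD : ∀ i, (x i).totalDegree ≤ D := by
    intro i
    have : (x i).totalDegree ≤ Finset.univ.sup fun i => (x i).totalDegree :=
      Finset.le_sup (f := fun i => (x i).totalDegree) (Finset.mem_univ i)
    omega
  set N : ℕ := ((d + 1) * D) ^ d with hN
  set t : ℕ := (d + 1) * N * D with ht
  set ι := (Fin (d + 1) → Fin (N + 1)) with hι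
  set g : ι → (Fin (d + 1) →₀ ℕ) :=
    fun α => Finsupp.equivFunOnFinite.symm (fun i => (α i : ℕ)) with hg
  have ginj : Function.Injective g := by
    intro α β hab
    have := congrArg Finsupp.equivFunOnFinite hab
    simp only [hg, Equiv.apply_symm_apply] at this
    funext i
    exact Fin.val_injective (congrFun this i)
  have hgval : ∀ (α : ι) (i : Fin (d + 1)), g α i = (α i : ℕ) := by
    intro α i; simp [hg]
  have lin : LinearIndependent k
      (fun α : ι => aeval x (monomial (g α) (1 : k))) := by
    have lin1 : LinearIndependent k (fun s : Fin (d + 1) →₀ ℕ => (monomial s (1 : k))) := by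
      have := (basisMonomials (Fin (d + 1)) k).linearIndependent
      rwa [coe_basisMonomials] at this
    have lin2 := lin1.comp g ginj
    have lin3 := lin2.map' (aeval x).toLinearMap (LinearMap.ker_eq_bot.mpr h)
    exact lin3
  have hdeg : ∀ α : ι, (aeval x (monomial (g α) (1 : k))).totalDegree ≤ t := by
    intro α
    rw [aeval_monomial, map_one, one_mul]
    rw [Finsupp.prod]
    calc (∏ i ∈ (g α).support, x i ^ (g α) i).totalDegree
        ≤ ∑ i ∈ (g α).support, (x i ^ (g α) i).totalDegree := totalDegree_finset_prod _ _
      _ ≤ ∑ _i ∈ (g α).support, N * D := by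
          refine Finset.sum_le_sum fun i _ => ?_
          refine le_trans (totalDegree_pow _ _) ?_
          exact Nat.mul_le_mul (by rw [hgval]; omega) (hxD i)
      _ ≤ ∑ _i ∈ (Finset.univ : Finset (Fin (d+1))), N * D :=
          Finset.sum_le_sum_of_subset (Finset.subset_univ _)
      _ = (d + 1) * (N * D) := by simp [Finset.sum_const, Finset.card_univ, mul_comm]
      _ = t := by ring
  set S : Set (MvPolynomial (Fin d) k) :=
    Set.range (fun s : {s : Fin d →₀ ℕ // (s.sum fun _ e => e) ≤ t} =>
      (monomial (s : Fin d →₀ ℕ) (1 : k))) with hS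
  have hspan : ∀ p : MvPolynomial (Fin d) k, p.totalDegree ≤ t →
      p ∈ Submodule.span k S := by
    intro p hp
    rw [p.as_sum]
    refine Submodule.sum_mem _ fun s hs => ?_
    have heq : (monomial s) (coeff s p) = (coeff s p) • (monomial s (1 : k)) := by
      rw [smul_monomial, smul_eq_mul, mul_one]
    rw [heq]
    exact Submodule.smul_mem _ _ (Submodule.subset_span
      ⟨⟨s, le_trans (le_totalDegree hs) hp⟩, rfl⟩)
  set W := Submodule.span k S with hW
  have lin' : LinearIndependent k
      (fun α : ι => (⟨aeval x (monomial (g α) (1 : k)), hspan _ (hdeg α)⟩ : W)) := by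
    refine LinearIndependent.of_comp W.subtype ?_
    exact lin
  have c1 := lin'.cardinal_lift_le_rank
  have c2 : Module.rank k W ≤ Cardinal.mk S := rank_span_le S
  have c3 : Cardinal.lift.{0} (Cardinal.mk S) ≤
      Cardinal.lift.{u} (Cardinal.mk {s : Fin d →₀ ℕ // (s.sum fun _ e => e) ≤ t}) :=
    Cardinal.mk_range_le_lift
  have hval_le : ∀ (s : {s : Fin d →₀ ℕ // (s.sum fun _ e => e) ≤ t}) (j : Fin d),
      (s : Fin d →₀ ℕ) j ≤ t := by
    rintro ⟨s, hs⟩ j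
    refine le_trans ?_ hs
    by_cases hj : j ∈ s.support
    · exact Finset.single_le_sum (fun _ _ => Nat.zero_le _) hj
    · simp [Finsupp.notMem_support_iff.mp hj]
  have c4 : Cardinal.mk {s : Fin d →₀ ℕ // (s.sum fun _ e => e) ≤ t} ≤
      Cardinal.mk (Fin d → Fin (t + 1)) := by
    refine Cardinal.mk_le_of_injective (f := fun s j => (⟨(s : Fin d →₀ ℕ) j,
      by have := hval_le s j; omega⟩ : Fin (t + 1))) ?_
    intro s₁ s₂ h12
    ext j
    exact congrArg Fin.val (congrFun h12 j)
  have main : ((N + 1) ^ (d + 1) : ℕ) ≤ ((t + 1) ^ d : ℕ) := by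
    have e1 : Cardinal.mk ι = ((N + 1) ^ (d + 1) : ℕ) := by
      simp [hι, Cardinal.mk_fintype]
    have e2 : Cardinal.mk (Fin d → Fin (t + 1)) = ((t + 1) ^ d : ℕ) := by
      simp [Cardinal.mk_fintype]
    have chain : Cardinal.lift.{u} (Cardinal.mk ι) ≤
        Cardinal.lift.{u} (Cardinal.mk (Fin d → Fin (t + 1))) := by
      calc Cardinal.lift.{u} (Cardinal.mk ι) ≤ Cardinal.lift.{0} (Module.rank k W) := c1
        _ ≤ Cardinal.lift.{0} (Cardinal.mk S) := Cardinal.lift_le.mpr c2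
        _ ≤ Cardinal.lift.{u} (Cardinal.mk {s : Fin d →₀ ℕ // (s.sum fun _ e => e) ≤ t}) := c3
        _ ≤ Cardinal.lift.{u} (Cardinal.mk (Fin d → Fin (t + 1))) := Cardinal.lift_le.mpr c4
    rw [e1, e2, Cardinal.lift_natCast, Cardinal.lift_natCast, Nat.cast_le] at chain
    exact chain
  have h2 : t + 1 ≤ ((d + 1) * D) * (N + 1) := by
    have h1D : 1 ≤ (d + 1) * D := Nat.mul_pos (by omega) hDpos
    calc t + 1 = (d + 1) * D * N + 1 := by rw [ht]; ring
      _ ≤ (d + 1) * D * N + (d + 1) * D := by omega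
      _ = ((d + 1) * D) * (N + 1) := by ring
  have h3 : (t + 1) ^ d ≤ (((d + 1) * D) * (N + 1)) ^ d := Nat.pow_le_pow_left h2 d
  have h4 : (((d + 1) * D) * (N + 1)) ^ d = N * (N + 1) ^ d := by
    rw [mul_pow, ← hN]
  have h5 : (N + 1) ^ (d + 1) = (N + 1) ^ d * (N + 1) := pow_succ _ _
  have hposd : 0 < (N + 1) ^ d := Nat.pow_pos (by omega)
  have : (N + 1) ^ d * (N + 1) ≤ (N + 1) ^ d * N := by
    calc (N + 1) ^ d * (N + 1) = (N + 1) ^ (d + 1) := (pow_succ _ _).symm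
      _ ≤ (t + 1) ^ d := main
      _ ≤ N * (N + 1) ^ d := h4 ▸ h3
      _ = (N + 1) ^ d * N := mul_comm _ _
  have := Nat.le_of_mul_le_mul_left this hposd
  omega

end PurityAux

/-- (Purity test) Let `A = k[X₁,…,X_n]`, `B = k[X₁,…,X_{n-r}]` embedded in `A` via
renaming of variables, and let `M` be a nonzero finitely generated `A`-module such that
`A ⧸ ann(M)` is a finitely generated `B`-module and the Krull dimension of `A ⧸ ann(M)`
equals `n - r`. Then `M` is `r`-pure (every nonzero cyclic submodule has codimension
exactly `r`) iff the localization map `M → S⁻¹M`, `S = B \ {0}`, is injective, i.e. no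
nonzero element of `M` is killed by a nonzero polynomial in the first `n - r` variables. -/
theorem pure_iff_relative_localization_injective
    {k : Type*} [Field k] (n r : ℕ) (hn : 1 ≤ n) (hr : r ≤ n)
    {M : Type*} [AddCommGroup M] [Module (MvPolynomial (Fin n) k) M]
    [Module.Finite (MvPolynomial (Fin n) k) M] [Nontrivial M]
    (hfin : ((Ideal.Quotient.mk (Module.annihilator (MvPolynomial (Fin n) k) M)).comp
        (MvPolynomial.rename (R := k) (Fin.castLE (Nat.sub_le n r))).toRingHom).Finite)
    (hdim : ringKrullDim (MvPolynomial (Fin n) k ⧸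
        Module.annihilator (MvPolynomial (Fin n) k) M) = ((n - r : ℕ) : WithBot ℕ∞)) :
    (∀ m : M, m ≠ 0 →
        ringKrullDim (MvPolynomial (Fin n) k ⧸
          (Submodule.span (MvPolynomial (Fin n) k) {m}).annihilator) =
            ((n - r : ℕ) : WithBot ℕ∞)) ↔
      (∀ (m : M) (s : MvPolynomial (Fin (n - r)) k), s ≠ 0 →
        (MvPolynomial.rename (Fin.castLE (Nat.sub_le n r)) s) • m = 0 → m = 0) := by
  classical
  set A := MvPolynomial (Fin n) k with hA
  set B := MvPolynomial (Fin (n - r)) k with hB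
  set φ : B →+* A := (MvPolynomial.rename (R := k) (Fin.castLE (Nat.sub_le n r))).toRingHom
    with hφ
  have hφinj : Function.Injective φ :=
    MvPolynomial.rename_injective _ (Fin.castLE_injective (Nat.sub_le n r))
  set I : Ideal A := Module.annihilator A M with hI
  -- common facts about J m
  have hIJ : ∀ m : M, I ≤ (Submodule.span A {m}).annihilator := by
    intro m a ha
    exact Submodule.mem_annihilator.mpr fun x _ => Module.mem_annihilator.mp ha x
  have hfactor_surj : ∀ m : M, Function.Surjective
      (Ideal.Quotient.factor (hIJ m)) := by
    intro m x
    obtain ⟨y, rfl⟩ := Ideal.Quotient.mk_surjective x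
    exact ⟨Ideal.Quotient.mk I y, Ideal.Quotient.factor_mk (hIJ m) y⟩
  have hffin : ∀ m : M, ((Ideal.Quotient.mk ((Submodule.span A {m}).annihilator)).comp φ).Finite
      := by
    intro m
    have hfactor : (Ideal.Quotient.mk ((Submodule.span A {m}).annihilator)).comp φ =
        (Ideal.Quotient.factor (hIJ m)).comp ((Ideal.Quotient.mk I).comp φ) :=
      RingHom.ext fun z => (Ideal.Quotient.factor_mk (hIJ m) (φ z)).symm
    rw [hfactor]
    exact RingHom.Finite.comp (RingHom.Finite.of_surjective _ (hfactor_surj m)) hfin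
  constructor
  · -- purity implies injectivity of localization
    intro hpure m s hs hsm
    by_contra hm0
    set J : Ideal A := (Submodule.span A {m}).annihilator with hJ
    have hφsJ : φ s ∈ J := by
      refine Submodule.mem_annihilator.mpr fun x hx => ?_
      obtain ⟨a, rfl⟩ := Submodule.mem_span_singleton.mp hx
      have hsm' : φ s • m = 0 := hsm
      rw [smul_comm, hsm', smul_zero]
    set f : B →+* A ⧸ J := (Ideal.Quotient.mk J).comp φ with hf
    have hfint : f.IsIntegral := (hffin m).to_isIntegral
    have hdimT : ringKrullDim (A ⧸ J) = ((n - r : ℕ) : WithBot ℕ∞) := hpure m hm0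
    obtain ⟨p, hp⟩ := PurityAux.exists_ltSeries_of_coe_le_krullDim
      (α := PrimeSpectrum (A ⧸ J)) (n := n - r) hdimT.ge
    set q : LTSeries (PrimeSpectrum B) :=
      p.map _ (PurityAux.strictMono_comap_of_isIntegral f hfint) with hq
    have hsq : s ∈ q.head.asIdeal := by
      show s ∈ (PrimeSpectrum.comap f p.head).asIdeal
      rw [PrimeSpectrum.comap_asIdeal, Ideal.mem_comap]
      have : f s = 0 := by
        rw [hf]
        exact Ideal.Quotient.eq_zero_iff_mem.mpr hφsJ
      rw [this]
      exact Ideal.zero_mem _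
    have hbotlt : (⟨⊥, Ideal.bot_prime⟩ : PrimeSpectrum B) < q.head := by
      refine lt_of_le_of_ne bot_le ?_
      intro hc
      apply hs
      have : s ∈ ((⟨⊥, Ideal.bot_prime⟩ : PrimeSpectrum B)).asIdeal := by rw [hc]; exact hsq
      simpa using this
    set q' : LTSeries (PrimeSpectrum B) := q.cons ⟨⊥, Ideal.bot_prime⟩ hbotlt with hq'
    have hq'len : q'.length = (n - r) + 1 := by
      show 0 + q.length + 1 = (n - r) + 1
      have : q.length = p.length := rfl
      omega
    obtain ⟨y, hy⟩ := PurityAux.exists_algebraicIndependent_of_ltSeries k ((n - r) + 1) q' hq'len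
    exact PurityAux.not_algebraicIndependent_succ (n - r) y hy
  · -- injectivity of localization implies purity
    intro hinj m hm0
    set J : Ideal A := (Submodule.span A {m}).annihilator with hJ
    have hJne : J ≠ ⊤ := by
      intro hc
      apply hm0
      have h1 : (1 : A) ∈ J := by rw [hc]; trivial
      have := Submodule.mem_annihilator.mp h1 m (Submodule.mem_span_singleton_self m)
      simpa using this
    haveI : Nontrivial (A ⧸ J) := Ideal.Quotient.nontrivial_iff.mpr hJne
    set f : B →+* A ⧸ J := (Ideal.Quotient.mk J).comp φ with hf
    have hfint : f.IsIntegral := (hffin m).to_isIntegral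
    have hfinj : Function.Injective f := by
      intro b₁ b₂ hb
      have hb' : Ideal.Quotient.mk J (φ b₁) = Ideal.Quotient.mk J (φ b₂) := hb
      rw [Ideal.Quotient.eq] at hb'
      have hz : φ (b₁ - b₂) ∈ J := by rwa [map_sub]
      by_contra hne
      have hs0 : b₁ - b₂ ≠ 0 := sub_ne_zero.mpr hne
      have hbm : φ (b₁ - b₂) • m = 0 :=
        Submodule.mem_annihilator.mp hz m (Submodule.mem_span_singleton_self m)
      exact hm0 (hinj m (b₁ - b₂) hs0 hbm)
    have d1 : ringKrullDim (A ⧸ J) ≤ ringKrullDim (A ⧸ I) :=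
      ringKrullDim_le_of_surjective _ (hfactor_surj m)
    have d2 : ringKrullDim (A ⧸ I) ≤ ringKrullDim B :=
      PurityAux.ringKrullDim_le_of_isIntegral _ hfin.to_isIntegral
    have d3 : ringKrullDim B ≤ ringKrullDim (A ⧸ J) :=
      PurityAux.le_ringKrullDim_of_isIntegral_of_injective f hfint hfinj
    exact le_antisymm (d1.trans hdim.le) (hdim ▸ (d2.trans d3))
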